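/- Let T be a finite tree rooted at s, C a set of vertices with s ∉ C, and Y a minimal s–C separator of size at most k. Let I be a minimal s–C separator with |I| ≤ |Y| such that R(s,Y) ⊆ R(s,I). For each x ∈ I define S_x = { y ∈ Y : y lies on the unique s–x path }. Then Y ⊆ ⋃_{x∈I} S_x, each |S_x| ≤ 1, the S_x are pairwise disjoint, and |S_x| = 1 for every x ∈ I. -/

import Mathlib

/-- Reachability in `G − S`. -/
def reachAvoid {V : Type*} (G : SimpleGraph V) (S : Set V) : V → V → Prop :=
  Relation.ReflTransGen (fun u v => G.Adj u v ∧ u ∉ S ∧ v ∉ S)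

/-- The set of vertices reachable from `s` in `G − S`. -/
def reachSetFrom {V : Type*} (G : SimpleGraph V) (s : V) (S : Set V) : Set V :=
  {v | reachAvoid G S s v}

/-- `S` is an `s`–`C` separator. -/
def IsSCSeparator {V : Type*} (G : SimpleGraph V) (s : V) (C : Set V) (S : Set V) : Prop :=
  S ⊆ ({s} ∪ C)ᶜ ∧ ∀ c ∈ C, ¬ reachAvoid G S s c

open SimpleGraph in
lemma reach_of_walk {V : Type*} {G : SimpleGraph V} (S : Set V) :
    ∀ {s v : V} (p : G.Walk s v), (∀ w ∈ p.support, w ∉ S) → reachAvoid G S s v := by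
  intro s v p
  induction p with
  | nil => intro _; exact Relation.ReflTransGen.refl
  | cons h' p ih =>
    intro hsup
    refine Relation.ReflTransGen.head ⟨h', hsup _ (by simp), hsup _ (by simp)⟩ (ih ?_)
    intro w hw; exact hsup w (by simp [hw])

open SimpleGraph in
lemma walk_of_reach {V : Type*} {G : SimpleGraph V} {S : Set V} {s v : V}
    (h : reachAvoid G S s v) (hs : s ∉ S) : ∃ p : G.Walk s v, ∀ w ∈ p.support, w ∉ S := by
  induction h with
  | refl => exact ⟨SimpleGraph.Walk.nil, by simp [hs]⟩
  | tail _ hbc ih =>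
    obtain ⟨p, hp⟩ := ih
    refine ⟨p.concat hbc.1, ?_⟩
    intro w hw
    rw [SimpleGraph.Walk.support_concat] at hw
    rcases (by simpa using hw : w ∈ p.support ∨ w = _) with hw | rfl
    · exact hp w hw
    · exact hbc.2.2

lemma eq_of_reach_mem {V : Type*} {G : SimpleGraph V} {S : Set V} {s x : V}
    (h : reachAvoid G S s x) (hx : x ∈ S) : x = s := by
  rcases h.cases_tail with rfl | ⟨b, _, hb⟩
  · rfl
  · exact absurd hx hb.2.2

open SimpleGraph in
lemma firstHit {V : Type*} {G : SimpleGraph V} (A : Set V) :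
    ∀ {s c : V} (p : G.Walk s c), p.IsPath → (∃ w ∈ p.support, w ∈ A) →
      ∃ x ∈ A, ∃ q : G.Walk s x, q.IsPath ∧ (∀ w ∈ q.support, w ∈ p.support) ∧
        ∀ w ∈ q.support, w ∈ A → w = x := by
  intro s c p
  induction p with
  | nil =>
    intro _ hex
    obtain ⟨w, hw, hwA⟩ := hex
    simp only [Walk.support_nil, List.mem_singleton] at hw
    subst hw
    exact ⟨w, hwA, Walk.nil, Walk.IsPath.nil, by simp, by simp⟩
  | @cons u a c h' p ih =>
    intro hp hex
    by_cases hu : u ∈ A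
    · exact ⟨u, hu, Walk.nil, Walk.IsPath.nil, by simp, by simp⟩
    · have hp' := (Walk.cons_isPath_iff h' p).mp hp
      obtain ⟨w, hw, hwA⟩ := hex
      have hwp : w ∈ p.support := by
        rcases (by simpa using hw : w = u ∨ w ∈ p.support) with rfl | h
        · exact absurd hwA hu
        · exact h
      obtain ⟨x, hxA, q, hq, hsub, havoid⟩ := ih hp'.1 ⟨w, hwp, hwA⟩
      refine ⟨x, hxA, Walk.cons h' q, ?_, ?_, ?_⟩
      · exact (Walk.cons_isPath_iff h' q).mpr ⟨hq, fun hc => hp'.2 (hsub _ hc)⟩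
      · intro z hz
        rcases (by simpa using hz : z = u ∨ z ∈ q.support) with rfl | h
        · simp
        · simp [hsub _ h]
      · intro z hz hzA
        rcases (by simpa using hz : z = u ∨ z ∈ q.support) with rfl | h
        · exact absurd hzA hu
        · exact havoid _ h hzA

open SimpleGraph in
theorem stmt_7 {V : Type*} [Fintype V] (T : SimpleGraph V) (hT : T.IsTree)
    (s : V) (C : Set V) (hsC : s ∉ C) (k : ℕ) (Y I : Set V)
    (hY : IsSCSeparator T s C Y)
    (hYmin : ∀ Y' ⊂ Y, ¬ IsSCSeparator T s C Y')
    (hYk : Y.ncard ≤ k)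
    (hI : IsSCSeparator T s C I)
    (hImin : ∀ I' ⊂ I, ¬ IsSCSeparator T s C I')
    (hIY : I.ncard ≤ Y.ncard)
    (hcov : reachSetFrom T s Y ⊆ reachSetFrom T s I)
    (S : V → Set V)
    (hSdef : ∀ x, S x = {y ∈ Y | ∃ p : T.Walk s x, p.IsPath ∧ y ∈ p.support}) :
    (Y ⊆ ⋃ x ∈ I, S x) ∧
    (∀ x ∈ I, (S x).ncard ≤ 1) ∧
    (I.Pairwise fun x u => Disjoint (S x) (S u)) ∧
    (∀ x ∈ I, (S x).ncard = 1) := by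
  classical
  obtain ⟨hYsub, hYsep⟩ := hY
  obtain ⟨hIsub, hIsep⟩ := hI
  have hsY : s ∉ Y := fun h => (hYsub h) (Set.mem_union_left _ rfl)
  have hsI : s ∉ I := fun h => (hIsub h) (Set.mem_union_left _ rfl)
  -- (†): the unique path from s to y ∈ Y meets Y only at y
  have dagger : ∀ y ∈ Y, ∀ (p : T.Walk s y), p.IsPath → ∀ z ∈ p.support, z ∈ Y → z = y := by
    intro y hy p hp z hz hzY
    by_contra hne
    have hns := hYmin _ (Set.sdiff_singleton_ssubset.mpr hy)
    rw [IsSCSeparator, not_and] at hns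
    have hns' := hns ((Set.diff_subset).trans hYsub)
    push_neg at hns'
    obtain ⟨c, hc, hreach⟩ := hns'
    obtain ⟨p0, hp0⟩ := walk_of_reach hreach (fun h => hsY h.1)
    have hPpath := p0.bypass_isPath
    have hPavoid : ∀ w ∈ p0.bypass.support, w ∉ Y \ {y} :=
      fun w hw => hp0 w (p0.support_bypass_subset hw)
    have hyP : y ∈ p0.bypass.support := by
      by_contra hyP
      apply hYsep c hc
      apply reach_of_walk Y p0.bypass
      intro w hw hwY
      exact hPavoid w hw ⟨hwY, fun h => hyP (by rwa [Set.mem_singleton_iff.mp h] at hw)⟩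
    have hQpath : (p0.bypass.takeUntil y hyP).IsPath := hPpath.takeUntil hyP
    have hpq : p = p0.bypass.takeUntil y hyP := (hT.existsUnique_path s y).unique hp hQpath
    have hzQ : z ∈ (p0.bypass.takeUntil y hyP).support := hpq ▸ hz
    exact hPavoid z (p0.bypass.support_takeUntil_subset hyP hzQ) ⟨hzY, by simpa using hne⟩
  -- each S x is a subsingleton
  have hSsub : ∀ x, (S x).Subsingleton := by
    intro x y1 hy1 y2 hy2
    rw [hSdef] at hy1 hy2
    obtain ⟨hy1Y, p1, hp1, hy1p⟩ := hy1
    obtain ⟨hy2Y, p2, hp2, hy2p⟩ := hy2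
    by_contra hne
    have hpp : p1 = p2 := (hT.existsUnique_path s x).unique hp1 hp2
    rw [hpp] at hy1p
    have h1 : y1 ∈ p2.support := hy1p
    by_cases hc2 : y2 ∈ (p2.takeUntil y1 h1).support
    · exact hne ((dagger y1 hy1Y _ (hp2.takeUntil h1) y2 hc2 hy2Y).symm)
    · have h2d : y2 ∈ (p2.dropUntil y1 h1).support := by
        have h' : y2 ∈ ((p2.takeUntil y1 h1).append (p2.dropUntil y1 h1)).support := by
          rw [p2.take_spec h1]; exact hy2p
        rcases (Walk.mem_support_append_iff _ _).mp h' with h | h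
        · exact absurd h hc2
        · exact h
      have hdrpath : (p2.dropUntil y1 h1).IsPath := hp2.dropUntil h1
      have hsbpath : ((p2.dropUntil y1 h1).takeUntil y2 h2d).IsPath := hdrpath.takeUntil h2d
      have htkpath : (p2.takeUntil y1 h1).IsPath := hp2.takeUntil h1
      have hnd : ((p2.takeUntil y1 h1).support ++ (p2.dropUntil y1 h1).support.tail).Nodup := by
        rw [← Walk.support_append, p2.take_spec h1]
        exact hp2.support_nodup
      obtain ⟨-, hndtail, hdisj⟩ := List.nodup_append.mp hnd
      have hsbtail : ∀ z ∈ ((p2.dropUntil y1 h1).takeUntil y2 h2d).support.tail,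
          z ∈ (p2.dropUntil y1 h1).support.tail := by
        intro z hz
        have hz' : z ∈ ((p2.dropUntil y1 h1).takeUntil y2 h2d).support := List.mem_of_mem_tail hz
        have hzny1 : z ≠ y1 := by
          intro h; subst h
          have hnod := hsbpath.support_nodup
          rw [Walk.support_eq_cons] at hnod
          exact (List.nodup_cons.mp hnod).1 hz
        have hzd : z ∈ (p2.dropUntil y1 h1).support :=
          (p2.dropUntil y1 h1).support_takeUntil_subset h2d hz'
        rw [Walk.support_eq_cons] at hzd
        rcases List.mem_cons.mp hzd with h | h
        · exact absurd h hzny1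
        · exact h
      have hrpath : ((p2.takeUntil y1 h1).append
          ((p2.dropUntil y1 h1).takeUntil y2 h2d)).IsPath := by
        rw [Walk.isPath_def, Walk.support_append]
        refine List.Nodup.append htkpath.support_nodup ?_ ?_
        · have hnod := hsbpath.support_nodup
          rw [Walk.support_eq_cons] at hnod
          exact (List.nodup_cons.mp hnod).2
        · intro a ha hb
          exact hdisj a ha a (hsbtail a hb) rfl
      have hy1r : y1 ∈ ((p2.takeUntil y1 h1).append
          ((p2.dropUntil y1 h1).takeUntil y2 h2d)).support := by
        rw [Walk.mem_support_append_iff]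
        exact Or.inl (p2.takeUntil y1 h1).end_mem_support
      exact hne (dagger y2 hy2Y _ hrpath y1 hy1r hy1Y)
  -- for each x ∈ I there is a path from s to x meeting I only at x, and it must meet Y
  have hnon : ∀ x ∈ I, ∃ y, y ∈ S x := by
    intro x hx
    have hns := hImin _ (Set.sdiff_singleton_ssubset.mpr hx)
    rw [IsSCSeparator, not_and] at hns
    have hns' := hns ((Set.diff_subset).trans hIsub)
    push_neg at hns'
    obtain ⟨c, hc, hreach⟩ := hns'
    obtain ⟨p0, hp0⟩ := walk_of_reach hreach (fun h => hsI h.1)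
    have hPpath := p0.bypass_isPath
    have hPavoid : ∀ w ∈ p0.bypass.support, w ∉ I \ {x} :=
      fun w hw => hp0 w (p0.support_bypass_subset hw)
    have hhit : ∃ w ∈ p0.bypass.support, w ∈ I := by
      by_contra h; push_neg at h
      exact hIsep c hc (reach_of_walk I p0.bypass h)
    obtain ⟨x', hx'I, q, hqpath, hqsub, hqavoid⟩ := firstHit I p0.bypass hPpath hhit
    have hxx : x' = x := by
      by_contra h
      exact hPavoid x' (hqsub _ q.end_mem_support) ⟨hx'I, by simpa using h⟩
    subst hxx
    by_cases hYq : ∃ y ∈ q.support, y ∈ Y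
    · obtain ⟨y, hyq, hyY⟩ := hYq
      exact ⟨y, by rw [hSdef]; exact ⟨hyY, q, hqpath, hyq⟩⟩
    · exfalso
      push_neg at hYq
      have hrY : x' ∈ reachSetFrom T s Y := reach_of_walk Y q hYq
      have hrI : reachAvoid T I s x' := hcov hrY
      exact hsI ((eq_of_reach_mem hrI hx'I) ▸ hx'I)
  -- coverage
  have hcover : ∀ y ∈ Y, ∃ x ∈ I, y ∈ S x := by
    intro y hy
    have hns := hYmin _ (Set.sdiff_singleton_ssubset.mpr hy)
    rw [IsSCSeparator, not_and] at hns
    have hns' := hns ((Set.diff_subset).trans hYsub)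
    push_neg at hns'
    obtain ⟨c, hc, hreach⟩ := hns'
    obtain ⟨p0, hp0⟩ := walk_of_reach hreach (fun h => hsY h.1)
    have hPpath := p0.bypass_isPath
    have hPavoid : ∀ w ∈ p0.bypass.support, w ∉ Y \ {y} :=
      fun w hw => hp0 w (p0.support_bypass_subset hw)
    have hhit : ∃ w ∈ p0.bypass.support, w ∈ I := by
      by_contra h; push_neg at h
      exact hIsep c hc (reach_of_walk I p0.bypass h)
    obtain ⟨x, hxI, q, hqpath, hqsub, hqavoid⟩ := firstHit I p0.bypass hPpath hhit
    by_cases hyq : y ∈ q.support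
    · exact ⟨x, hxI, by rw [hSdef]; exact ⟨hy, q, hqpath, hyq⟩⟩
    · exfalso
      have hqY : ∀ w ∈ q.support, w ∉ Y := by
        intro w hw hwY
        exact hPavoid w (hqsub _ hw) ⟨hwY, by
          simp only [Set.mem_singleton_iff]
          intro h; subst h; exact hyq hw⟩
      have hrY : x ∈ reachSetFrom T s Y := reach_of_walk Y q hqY
      have hrI : reachAvoid T I s x := hcov hrY
      exact hsI ((eq_of_reach_mem hrI hxI) ▸ hxI)
  -- singletons
  have hsing : ∀ x, ∃ y, x ∈ I → S x = {y} := by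
    intro x
    by_cases h : x ∈ I
    · obtain ⟨y, hy⟩ := hnon x h
      refine ⟨y, fun _ => ?_⟩
      ext z
      simp only [Set.mem_singleton_iff]
      exact ⟨fun hz => hSsub x hz hy, fun hz => hz ▸ hy⟩
    · exact ⟨s, fun hc => absurd hc h⟩
  choose g hg using hsing
  have part4 : ∀ x ∈ I, (S x).ncard = 1 := by
    intro x hx; rw [hg x hx]; exact Set.ncard_singleton _
  have part1 : Y ⊆ ⋃ x ∈ I, S x := by
    intro y hy
    obtain ⟨x, hx, hyx⟩ := hcover y hy
    exact Set.mem_biUnion hx hyx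
  refine ⟨part1, fun x hx => le_of_eq (part4 x hx), ?_, part4⟩
  intro x hx u hu hne
  rw [Set.disjoint_left]
  intro a hax hau
  rw [hg x hx, Set.mem_singleton_iff] at hax
  rw [hg u hu, Set.mem_singleton_iff] at hau
  have hgxu : g x = g u := by rw [← hax, hau]
  have hYsub' : Y ⊆ g '' (I \ {u}) := by
    intro y hy
    obtain ⟨x', hx', hyx'⟩ := hcover y hy
    rw [hg x' hx', Set.mem_singleton_iff] at hyx'
    by_cases h : x' = u
    · exact ⟨x, ⟨hx, hne⟩, by rw [hgxu, ← h, ← hyx']⟩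
    · exact ⟨x', ⟨hx', h⟩, hyx'.symm⟩
  have h1 : Y.ncard ≤ (I \ {u}).ncard :=
    le_trans (Set.ncard_le_ncard hYsub' (Set.toFinite _)) (Set.ncard_image_le (Set.toFinite _))
  have h2 : (I \ {u}).ncard < I.ncard := Set.ncard_diff_singleton_lt_of_mem hu (Set.toFinite _)
  omega
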